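/- arXiv:1403.6718 — 5 statements merged into one kernel-verified Lean document; each statement's English description precedes it below -/
import Mathlib

section
/- For 0 < p < 1, α > 0, and x ∈ ℝ, every minimizer t* of the one-dimensional function t ↦ (t - x)² + α|t|^p satisfies t* = 0 or |t*| ≥ γ_α, where γ_α = (α(1-p))^{1/(2-p)}. -/
-- Bernoulli-type tangent line bound: for 0 < u, 0 < t, 0 < p < 1,
-- u ^ p ≤ t ^ p + p * t ^ (p - 1) * (u - t).
lemma tangent_rpow (p t u : ℝ) (hp0 : 0 < p) (hp1 : p < 1) (ht : 0 < t) (hu : 0 < u) :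
    u ^ p ≤ t ^ p + p * t ^ (p - 1) * (u - t) := by
  have hs : (-1 : ℝ) ≤ u / t - 1 := by
    have : 0 < u / t := div_pos hu ht
    linarith
  have hber := rpow_one_add_lt_one_add_mul_self (s := u / t - 1)
  have hber' : (1 + (u / t - 1)) ^ p ≤ 1 + p * (u / t - 1) := by
    rcases eq_or_ne (u / t - 1) 0 with h | h
    · simp [h]
    · exact (rpow_one_add_lt_one_add_mul_self hs h hp0 hp1).le
  have hud : (1 : ℝ) + (u / t - 1) = u / t := by ring
  rw [hud] at hber'
  have hdiv : (u / t) ^ p = u ^ p / t ^ p := Real.div_rpow hu.le ht.le p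
  rw [hdiv] at hber'
  have htp : (0 : ℝ) < t ^ p := Real.rpow_pos_of_pos ht p
  have h1 : u ^ p ≤ (1 + p * (u / t - 1)) * t ^ p := by
    rw [div_le_iff₀ htp] at hber'
    linarith
  have h2 : (1 + p * (u / t - 1)) * t ^ p = t ^ p + p * (t ^ p / t) * (u - t) := by
    field_simp
  have h3 : t ^ p / t = t ^ (p - 1) := by
    rw [Real.rpow_sub ht, Real.rpow_one]
  rw [h2, h3] at h1
  exact h1

lemma aux_pos (α p x t : ℝ) (hα : 0 < α) (hp0 : 0 < p) (hp1 : p < 1) (ht : 0 < t)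
    (hmin : ∀ s : ℝ, (t - x) ^ 2 + α * |t| ^ p ≤ (s - x) ^ 2 + α * |s| ^ p) :
    (α * (1 - p)) ^ ((1 : ℝ) / (2 - p)) ≤ t := by
  have habs : |t| = t := abs_of_pos ht
  rw [habs] at hmin
  -- comparison with s = 0
  have h0 := hmin 0
  rw [abs_zero, Real.zero_rpow hp0.ne'] at h0
  -- h0 : (t-x)^2 + α*t^p ≤ (0-x)^2 + α*0
  have hS : (0 : ℝ) < t ^ (p - 1) := Real.rpow_pos_of_pos ht _
  have hTS : t ^ (p - 1) * t = t ^ p := by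
    have h := Real.rpow_add ht (p - 1) 1
    rw [Real.rpow_one] at h
    rw [← h]
    congr 1
    ring
  -- 2x lower bound
  have h2x : t + α * t ^ (p - 1) ≤ 2 * x := by
    nlinarith [Real.rpow_pos_of_pos ht p]
  -- key inequality
  have key : α * (1 - p) ≤ t ^ (2 - p) := by
    by_contra hc
    push_neg at hc
    set A := α * (1 - p) * t ^ (p - 1) with hA
    have htA : t < A := by
      have h1 : t ^ (2 - p) * t ^ (p - 1) = t := by
        rw [← Real.rpow_add ht]
        have : 2 - p + (p - 1) = 1 := by ring
        rw [this, Real.rpow_one]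
      have := mul_lt_mul_of_pos_right hc hS
      rw [h1] at this
      exact this
    set u := (t + A) / 2 with hu
    have htu : t < u := by simp [hu]; linarith
    have huA : u < A := by simp [hu]; linarith
    have hu0 : 0 < u := ht.trans htu
    have hmu := hmin u
    rw [abs_of_pos hu0] at hmu
    have hber := tangent_rpow p t u hp0 hp1 ht hu0
    -- combine
    have hprod : 0 ≤ (u - t) * (2 * x - t - α * t ^ (p - 1)) :=
      mul_nonneg (by linarith) (by linarith)
    nlinarith [mul_pos (sub_pos.2 htu) hS]
  -- conclude
  have h2p : (0 : ℝ) < 2 - p := by linarith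
  have hpos : (0 : ℝ) < α * (1 - p) := mul_pos hα (by linarith)
  calc (α * (1 - p)) ^ ((1 : ℝ) / (2 - p))
      ≤ (t ^ (2 - p)) ^ ((1 : ℝ) / (2 - p)) :=
        Real.rpow_le_rpow hpos.le key (by positivity)
    _ = t := by
        rw [← Real.rpow_mul ht.le, mul_one_div, div_self h2p.ne', Real.rpow_one]

theorem stmt_5 (α p x : ℝ) (hα : 0 < α) (hp0 : 0 < p) (hp1 : p < 1)
    (t : ℝ) (hmin : ∀ s : ℝ, (t - x) ^ 2 + α * |t| ^ p ≤ (s - x) ^ 2 + α * |s| ^ p) :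
    t = 0 ∨ (α * (1 - p)) ^ ((1 : ℝ) / (2 - p)) ≤ |t| := by
  rcases lt_trichotomy t 0 with htn | rfl | htp
  · right
    have hmin' : ∀ s : ℝ, (-t - -x) ^ 2 + α * |(-t)| ^ p ≤ (s - -x) ^ 2 + α * |s| ^ p := by
      intro s
      have := hmin (-s)
      have e1 : (-t - -x) ^ 2 = (t - x) ^ 2 := by ring
      have e2 : (s - -x) ^ 2 = (-s - x) ^ 2 := by ring
      rw [e1, e2, abs_neg, ← abs_neg s]
      exact this
    have := aux_pos α p (-x) (-t) hα hp0 hp1 (by linarith) hmin'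
    rwa [abs_of_neg htn]
  · left; rfl
  · right
    rw [abs_of_pos htp]
    exact aux_pos α p x t hα hp0 hp1 htp hmin
end

section
/- For 0 < p < 1, α > 0, and x ∈ ℝ with |x| < τ_α = ((2-p)/(2-2p))(α(1-p))^{1/(2-p)}, the unique global minimizer of t ↦ (t - x)² + α|t|^p is t = 0. -/
open Real

lemma key_ineq (α p : ℝ) (hα : 0 < α) (hp0 : 0 < p) (hp1 : p < 1) (s : ℝ) (hs : 0 < s) :
    ((2 - p) / (1 - p)) * (α * (1 - p)) ^ ((1 : ℝ) / (2 - p)) ≤ s + α * s ^ (p - 1) := by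
  have h1p : (0:ℝ) < 1 - p := by linarith
  have hq : (0:ℝ) < 2 - p := by linarith
  set w₁ : ℝ := (1 - p) / (2 - p) with hw1
  set w₂ : ℝ := 1 / (2 - p) with hw2
  have hw1pos : 0 < w₁ := div_pos h1p hq
  have hw2pos : 0 < w₂ := div_pos one_pos hq
  have hwsum : w₁ + w₂ = 1 := by
    rw [hw1, hw2, ← add_div]
    field_simp
    ring
  have hsp : 0 < s ^ (p - 1) := rpow_pos_of_pos hs _
  have hp₁ : 0 < s / w₁ := div_pos hs hw1pos
  have hp₂ : 0 < α * s ^ (p - 1) / w₂ := div_pos (mul_pos hα hsp) hw2pos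
  have amgm := Real.geom_mean_le_arith_mean2_weighted hw1pos.le hw2pos.le hp₁.le hp₂.le hwsum
  have hright : w₁ * (s / w₁) + w₂ * (α * s ^ (p - 1) / w₂) = s + α * s ^ (p - 1) := by
    field_simp
  rw [hright] at amgm
  refine le_trans (le_of_eq ?_) amgm
  -- equality of the geometric mean with the constant
  have e1 : (s / w₁) ^ w₁ = exp ((Real.log s - Real.log w₁) * w₁) := by
    rw [rpow_def_of_pos hp₁, Real.log_div hs.ne' hw1pos.ne']
  have e2 : (α * s ^ (p - 1) / w₂) ^ w₂ =
      exp ((Real.log α + (p - 1) * Real.log s - Real.log w₂) * w₂) := by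
    rw [rpow_def_of_pos hp₂, Real.log_div (mul_pos hα hsp).ne' hw2pos.ne',
      Real.log_mul hα.ne' hsp.ne', Real.log_rpow hs]
  have e3 : (α * (1 - p)) ^ ((1 : ℝ) / (2 - p)) =
      exp ((Real.log α + Real.log (1 - p)) * w₂) := by
    rw [rpow_def_of_pos (mul_pos hα h1p), Real.log_mul hα.ne' h1p.ne', hw2]
  have e4 : (2 - p) / (1 - p) = exp (Real.log (2 - p) - Real.log (1 - p)) := by
    rw [← Real.log_div hq.ne' h1p.ne', Real.exp_log (div_pos hq h1p)]
  rw [e3, e4, e1, e2, ← Real.exp_add, ← Real.exp_add]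
  congr 1
  have lw1 : Real.log w₁ = Real.log (1 - p) - Real.log (2 - p) := by
    rw [hw1, Real.log_div h1p.ne' hq.ne']
  have lw2 : Real.log w₂ = - Real.log (2 - p) := by
    rw [hw2, Real.log_div one_ne_zero hq.ne', Real.log_one]; ring
  rw [lw1, lw2, hw1, hw2]
  field_simp
  ring

theorem stmt_6 (α p x : ℝ) (hα : 0 < α) (hp0 : 0 < p) (hp1 : p < 1)
    (hx : |x| < ((2 - p) / (2 - 2 * p)) * (α * (1 - p)) ^ ((1 : ℝ) / (2 - p))) :
    ∀ t : ℝ, t ≠ 0 →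
      (0 - x) ^ 2 + α * |(0 : ℝ)| ^ p < (t - x) ^ 2 + α * |t| ^ p := by
  intro t ht
  have h1p : (0:ℝ) < 1 - p := by linarith
  have hq : (0:ℝ) < 2 - p := by linarith
  have hs : 0 < |t| := abs_pos.mpr ht
  have key := key_ineq α p hα hp0 hp1 |t| hs
  have hx2 : 2 * |x| < ((2 - p) / (1 - p)) * (α * (1 - p)) ^ ((1 : ℝ) / (2 - p)) := by
    have hc : 0 < (α * (1 - p)) ^ ((1 : ℝ) / (2 - p)) := rpow_pos_of_pos (mul_pos hα h1p) _
    have h22 : (2:ℝ) - 2 * p ≠ 0 := by linarith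
    have hcoef : (2 - p) / (2 - 2 * p) * 2 = (2 - p) / (1 - p) := by
      field_simp
    calc 2 * |x| < 2 * ((2 - p) / (2 - 2 * p) * (α * (1 - p)) ^ ((1 : ℝ) / (2 - p))) := by
          linarith
      _ = ((2 - p) / (1 - p)) * (α * (1 - p)) ^ ((1 : ℝ) / (2 - p)) := by
          rw [← hcoef]; ring
  have key2 : 2 * |x| < |t| + α * |t| ^ (p - 1) := lt_of_lt_of_le hx2 key
  have hmul : 2 * |x| * |t| < |t| ^ 2 + α * |t| ^ p := by
    have := mul_lt_mul_of_pos_right key2 hs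
    have hpow : |t| ^ (p - 1) * |t| = |t| ^ p := by
      have h := (Real.rpow_add hs (p - 1) 1).symm
      rw [Real.rpow_one] at h
      rw [h]
      norm_num
    nlinarith [hpow]
  have habs : t * x ≤ |t| * |x| := le_trans (le_abs_self _) (by rw [abs_mul])
  have h0 : |(0:ℝ)| ^ p = 0 := by
    rw [abs_zero, Real.zero_rpow hp0.ne']
  rw [h0]
  have ht2 : t ^ 2 = |t| ^ 2 := (sq_abs t).symm
  nlinarith [hmul, habs, ht2]
end

section
/- Let β > 0 and x ∈ ℝ^M with ‖x‖₁ < β/2. Then the zero vector is the unique minimizer of v ↦ ‖v - x‖₂² + β‖v‖_∞ over ℝ^M. -/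
theorem stmt_8 (M : ℕ) (β : ℝ) (hβ : 0 < β) (x : Fin M → ℝ)
    (hx : ∑ i, |x i| < β / 2) :
    let f : (Fin M → ℝ) → ℝ := fun v => (∑ i, (v i - x i) ^ 2) + β * (⨆ i, |v i|)
    (∀ v, f 0 ≤ f v) ∧ ∀ v, v ≠ 0 → f 0 < f v := by
  intro f
  have hzero : (⨆ _ : Fin M, (0 : ℝ)) = 0 := by
    rcases isEmpty_or_nonempty (Fin M) with h | h
    · exact Real.iSup_of_isEmpty _
    · simp
  have hf0 : f 0 = ∑ i, (x i) ^ 2 := by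
    simp [f, hzero]
  have hmain : ∀ v, f 0 + ∑ i, (v i) ^ 2 ≤ f v := by
    intro v
    set S := ⨆ i, |v i| with hSdef
    have hbd : BddAbove (Set.range fun i => |v i|) :=
      Set.Finite.bddAbove (Set.finite_range _)
    have hle : ∀ i, |v i| ≤ S := fun i => le_ciSup hbd i
    have hS0 : 0 ≤ S := by
      rcases isEmpty_or_nonempty (Fin M) with h | h
      · simp [hSdef, Real.iSup_of_isEmpty]
      · exact le_trans (abs_nonneg _) (hle (Classical.arbitrary _))
    have hvx : ∑ i, v i * x i ≤ S * ∑ i, |x i| := by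
      rw [Finset.mul_sum]
      apply Finset.sum_le_sum
      intro i _
      calc v i * x i ≤ |v i * x i| := le_abs_self _
        _ = |v i| * |x i| := abs_mul _ _
        _ ≤ S * |x i| := by
          exact mul_le_mul_of_nonneg_right (hle i) (abs_nonneg _)
    have hexp : ∑ i, (v i - x i) ^ 2
        = ∑ i, (v i) ^ 2 - 2 * ∑ i, v i * x i + ∑ i, (x i) ^ 2 := by
      rw [Finset.mul_sum, ← Finset.sum_sub_distrib, ← Finset.sum_add_distrib]
      apply Finset.sum_congr rfl
      intro i _
      ring
    have hβS : 2 * (S * ∑ i, |x i|) ≤ β * S := by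
      have : S * (2 * ∑ i, |x i|) ≤ S * β := by
        apply mul_le_mul_of_nonneg_left _ hS0
        linarith
      linarith
    rw [hf0]
    show ∑ i, (x i) ^ 2 + ∑ i, (v i) ^ 2 ≤ ∑ i, (v i - x i) ^ 2 + β * S
    rw [hexp]
    linarith
  constructor
  · intro v
    have := hmain v
    have hnn : (0:ℝ) ≤ ∑ i, (v i) ^ 2 :=
      Finset.sum_nonneg fun i _ => sq_nonneg _
    linarith
  · intro v hv
    have := hmain v
    have hpos : (0:ℝ) < ∑ i, (v i) ^ 2 := by
      obtain ⟨i, hi⟩ : ∃ i, v i ≠ 0 := by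
        by_contra h
        push_neg at h
        exact hv (funext h)
      apply Finset.sum_pos' (fun j _ => sq_nonneg _)
      exact ⟨i, Finset.mem_univ i, by positivity⟩
    linarith
end

section
/- Local convexity of the restricted functional: let Γ be finite, T : ℝ^Γ → H linear with ‖Tz‖² ≥ c‖z‖² for all z ∈ ℝ^Γ and some c > 0, let 0 < p < c with p < 1, α > 0, and let u* ∈ ℝ^Γ with |u*_λ| ≥ γ_α = (α(1-p))^{1/(2-p)} for all λ ∈ Γ. Then the Hessian of F(u) = ‖T(u+v) - y‖² + α Σ_λ |u_λ|^p at u*, namely 2T*T - αp(1-p)·diag(|u*_λ|^{p-2}), is positive definite: ⟨z, (2T*T - αp(1-p)diag(|u*|^{p-2})) z⟩ ≥ (c - p)‖z‖² for all z ∈ ℝ^Γ. -/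
theorem stmt_17 {Γ : Type*} [Fintype Γ] {H : Type*} [NormedAddCommGroup H]
    [InnerProductSpace ℝ H]
    (T : EuclideanSpace ℝ Γ →L[ℝ] H) (c α p : ℝ) (hc : 0 < c)
    (hT : ∀ z : EuclideanSpace ℝ Γ, c * ‖z‖ ^ 2 ≤ ‖T z‖ ^ 2)
    (hα : 0 < α) (hp0 : 0 < p) (hp1 : p < 1) (hpc : p < c)
    (u : EuclideanSpace ℝ Γ)
    (hu : ∀ lam, (α * (1 - p)) ^ ((1 : ℝ) / (2 - p)) ≤ |u lam|) :
    ∀ z : EuclideanSpace ℝ Γ,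
      (c - p) * ‖z‖ ^ 2 ≤
        2 * ‖T z‖ ^ 2 - α * p * (1 - p) * ∑ lam, |u lam| ^ (p - 2) * (z lam) ^ 2 := by
  intro z
  have hA : 0 < α * (1 - p) := mul_pos hα (by linarith)
  have hγ : 0 < (α * (1 - p)) ^ ((1 : ℝ) / (2 - p)) := Real.rpow_pos_of_pos hA _
  have hγpow : ((α * (1 - p)) ^ ((1 : ℝ) / (2 - p))) ^ (p - 2) = (α * (1 - p))⁻¹ := by
    rw [← Real.rpow_mul hA.le,
      show (1 : ℝ) / (2 - p) * (p - 2) = -1 by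
        have h2p : (2 : ℝ) - p ≠ 0 := by linarith
        field_simp
        ring,
      Real.rpow_neg_one]
  have hkey : ∀ lam, |u lam| ^ (p - 2) ≤ (α * (1 - p))⁻¹ := by
    intro lam
    calc |u lam| ^ (p - 2) ≤ ((α * (1 - p)) ^ ((1 : ℝ) / (2 - p))) ^ (p - 2) :=
          Real.rpow_le_rpow_of_nonpos hγ (hu lam) (by linarith)
      _ = (α * (1 - p))⁻¹ := hγpow
  have hnorm : ‖z‖ ^ 2 = ∑ lam, (z lam) ^ 2 := by
    rw [EuclideanSpace.norm_eq, Real.sq_sqrt (by positivity)]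
    simp [sq_abs]
  have hsum : α * p * (1 - p) * ∑ lam, |u lam| ^ (p - 2) * (z lam) ^ 2 ≤ p * ‖z‖ ^ 2 := by
    rw [hnorm, Finset.mul_sum, Finset.mul_sum]
    refine Finset.sum_le_sum fun lam _ => ?_
    have h1 : |u lam| ^ (p - 2) * (z lam) ^ 2 ≤ (α * (1 - p))⁻¹ * (z lam) ^ 2 :=
      mul_le_mul_of_nonneg_right (hkey lam) (sq_nonneg _)
    calc α * p * (1 - p) * (|u lam| ^ (p - 2) * (z lam) ^ 2)
        ≤ α * p * (1 - p) * ((α * (1 - p))⁻¹ * (z lam) ^ 2) := by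
          exact mul_le_mul_of_nonneg_left h1 (mul_nonneg (mul_nonneg hα.le hp0.le) (by linarith))
      _ = p * (z lam) ^ 2 := by have h1p : (1 : ℝ) - p ≠ 0 := (by linarith); field_simp
  have h2 := hT z
  nlinarith [norm_nonneg z, sq_nonneg ‖z‖]
end

section
/- For a weakly null sequence (v^{(n)}) in ℓ₂(Λ) and a ∈ ℓ₂(Λ): if S : ℝ → ℝ satisfies |S(x) - S(y)| ≤ κ|x - y| for some κ < 1 whenever |x|, |y| ≤ 2K (where K bounds ‖v^{(n)}‖₂), and ‖ (S∘(a + v^{(n)}) - S∘a) - v^{(n)} ‖₂ → 0 componentwise-extended, then ‖v^{(n)}‖₂ → 0. -/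
open RealInnerProductSpace in
theorem stmt_19 {Λ : Type*} [Countable Λ]
    (a : lp (fun _ : Λ => ℝ) 2) (v : ℕ → lp (fun _ : Λ => ℝ) 2)
    (K κ : ℝ) (hκ0 : 0 < κ) (hκ1 : κ < 1)
    (hK : ∀ n, ‖v n‖ ≤ K)
    (hweak : ∀ w : lp (fun _ : Λ => ℝ) 2,
      Filter.Tendsto (fun n => ⟪v n, w⟫) Filter.atTop (nhds 0))
    (S : ℝ → ℝ)
    (hS : ∀ x y : ℝ, |x| ≤ 2 * K → |y| ≤ 2 * K → |S x - S y| ≤ κ * |x - y|)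
    (hmain : Filter.Tendsto
      (fun n => ∑' lam, (S (a lam + v n lam) - S (a lam) - v n lam) ^ 2)
      Filter.atTop (nhds 0)) :
    Filter.Tendsto (fun n => ‖v n‖) Filter.atTop (nhds 0) := by
  classical
  have hK0 : (0:ℝ) ≤ K := le_trans (norm_nonneg _) (hK 0)
  rcases hK0.eq_or_lt with hK0' | hKpos
  · have hz : ∀ n, ‖v n‖ = 0 :=
      fun n => le_antisymm ((hK n).trans hK0'.symm.le) (norm_nonneg _)
    simpa [hz] using (tendsto_const_nhds : Filter.Tendsto (fun _ : ℕ => (0:ℝ)) Filter.atTop (nhds 0))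
  have h1κ : (0:ℝ) < 1 - κ := by linarith
  have htwo : (0:ℝ) < (2 : ENNReal).toReal := by norm_num
  -- squares of lp 2 elements are summable
  have hsq : ∀ f : lp (fun _ : Λ => ℝ) 2, Summable fun lam => (f lam)^2 := by
    intro f
    have h := (lp.memℓp f).summable htwo
    have : ∀ lam : Λ, ‖f lam‖ ^ (2 : ENNReal).toReal = (f lam)^2 := by
      intro lam
      rw [show (2 : ENNReal).toReal = ((2:ℕ):ℝ) by norm_num, Real.rpow_natCast]
      simp [sq_abs]
    simpa [this] using h
  -- norm squared formula
  have hnorm : ∀ f : lp (fun _ : Λ => ℝ) 2, ‖f‖^2 = ∑' lam, (f lam)^2 := by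
    intro f
    have h := lp.norm_rpow_eq_tsum htwo f
    have h1 : ∀ lam : Λ, ‖f lam‖ ^ (2 : ENNReal).toReal = (f lam)^2 := by
      intro lam
      rw [show (2 : ENNReal).toReal = ((2:ℕ):ℝ) by norm_num, Real.rpow_natCast]
      simp [sq_abs]
    have h2 : ‖f‖ ^ (2 : ENNReal).toReal = ‖f‖^2 := by
      rw [show (2 : ENNReal).toReal = ((2:ℕ):ℝ) by norm_num, Real.rpow_natCast]
    rw [← h2, h]
    exact tsum_congr h1
  -- pointwise convergence to 0
  have hpt : ∀ lam : Λ, Filter.Tendsto (fun n => v n lam) Filter.atTop (nhds 0) := by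
    intro lam
    have h := hweak (lp.single 2 lam (1:ℝ))
    simpa [lp.inner_single_right, RCLike.inner_apply] using h
  -- finite exceptional set
  have hFfin : {lam : Λ | K < |a lam|}.Finite := by
    have hev : ∀ᶠ lam in Filter.cofinite, (a lam)^2 < K^2 :=
      (hsq a).tendsto_cofinite_zero.eventually (gt_mem_nhds (by positivity))
    refine (Filter.eventually_cofinite.mp hev).subset ?_
    intro lam hlam
    simp only [Set.mem_setOf_eq] at *
    intro h
    have h0 : 0 ≤ |a lam| := abs_nonneg _
    nlinarith [sq_abs (a lam)]
  set F : Finset Λ := hFfin.toFinset with hF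
  set d : ℕ → Λ → ℝ := fun n lam => S (a lam + v n lam) - S (a lam) - v n lam with hd
  -- componentwise bounds
  have hvK : ∀ n lam, |v n lam| ≤ K := by
    intro n lam
    exact le_trans (lp.norm_apply_le_norm two_ne_zero (v n) lam) (hK n)
  have hw_le : ∀ n lam, lam ∉ F →
      |S (a lam + v n lam) - S (a lam)| ≤ κ * |v n lam| := by
    intro n lam hlam
    have ha : |a lam| ≤ K := by
      simp only [hF, Set.Finite.mem_toFinset, Set.mem_setOf_eq, not_lt] at hlam
      exact hlam
    have h1 : |a lam + v n lam| ≤ 2 * K :=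
      le_trans (abs_add_le _ _) (by linarith [hvK n lam])
    have h2 : |a lam| ≤ 2 * K := by linarith
    have := hS _ _ h1 h2
    simpa using this
  have hkey : ∀ n lam, lam ∉ F → (1 - κ)^2 * (v n lam)^2 ≤ (d n lam)^2 := by
    intro n lam hlam
    have hw := hw_le n lam hlam
    have h1 : (1 - κ) * |v n lam| ≤ |d n lam| := by
      have hvw : v n lam - (S (a lam + v n lam) - S (a lam)) = -(d n lam) := by
        simp only [hd]; ring
      have h2 := abs_sub_abs_le_abs_sub (v n lam) (S (a lam + v n lam) - S (a lam))
      rw [hvw, abs_neg] at h2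
      nlinarith [abs_nonneg (v n lam)]
    have h2 : ((1 - κ) * |v n lam|)^2 ≤ |d n lam|^2 := by
      have h0 : 0 ≤ (1 - κ) * |v n lam| := by positivity
      nlinarith [abs_nonneg (d n lam)]
    calc (1 - κ)^2 * (v n lam)^2 = ((1 - κ) * |v n lam|)^2 := by
          rw [mul_pow, sq_abs]
      _ ≤ |d n lam|^2 := h2
      _ = (d n lam)^2 := sq_abs _
  have hd_le : ∀ n lam, lam ∉ F → (d n lam)^2 ≤ (1 + κ)^2 * (v n lam)^2 := by
    intro n lam hlam
    have hw := hw_le n lam hlam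
    have h1 : |d n lam| ≤ (1 + κ) * |v n lam| := by
      have hdd : d n lam = (S (a lam + v n lam) - S (a lam)) - v n lam := by
        simp only [hd]
      have h2 : |d n lam| ≤ |S (a lam + v n lam) - S (a lam)| + |v n lam| :=
        hdd ▸ abs_sub _ _
      nlinarith
    calc (d n lam)^2 = |d n lam|^2 := (sq_abs _).symm
      _ ≤ ((1 + κ) * |v n lam|)^2 := by
          nlinarith [abs_nonneg (d n lam), abs_nonneg (v n lam)]
      _ = (1 + κ)^2 * (v n lam)^2 := by rw [mul_pow, sq_abs]
  -- summability of d n squared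
  have hdsum : ∀ n, Summable fun lam => (d n lam)^2 := by
    intro n
    rw [← summable_subtype_and_compl (s := (↑F : Set Λ))]
    refine ⟨Summable.of_finite, ?_⟩
    refine Summable.of_nonneg_of_le (fun x => sq_nonneg _) ?_
      (((hsq (v n)).mul_left ((1 + κ)^2)).subtype (↑F : Set Λ)ᶜ)
    rintro ⟨lam, hlam⟩
    exact hd_le n lam (by simpa using hlam)
  -- the key inequality
  set C : ℝ := ((1 - κ)^2)⁻¹ with hCdef
  have hCpos : 0 < C := by positivity
  have hbound : ∀ n, ‖v n‖^2 ≤ (∑ lam ∈ F, (v n lam)^2) + C * ∑' lam, (d n lam)^2 := by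
    intro n
    rw [hnorm (v n), ← Summable.sum_add_tsum_subtype_compl (hsq (v n)) F]
    gcongr
    have hstep : (∑' x : {lam // lam ∉ F}, ((v n x)^2 : ℝ))
        ≤ ∑' x : {lam // lam ∉ F}, C * (d n x)^2 := by
      refine Summable.tsum_le_tsum ?_ ?_ ?_
      · rintro ⟨lam, hlam⟩
        have h := hkey n lam hlam
        have := mul_le_mul_of_nonneg_left h (le_of_lt hCpos)
        calc ((v n lam)^2 : ℝ) = C * ((1 - κ)^2 * (v n lam)^2) := by
              rw [hCdef]; field_simp
          _ ≤ C * (d n lam)^2 := this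
      · exact ((hsq (v n)).subtype _)
      · exact ((hdsum n).mul_left C).subtype _
    refine hstep.trans ?_
    rw [tsum_mul_left]
    gcongr
    have := Summable.sum_add_tsum_subtype_compl (hdsum n) F
    have hFnn : 0 ≤ ∑ lam ∈ F, (d n lam)^2 := Finset.sum_nonneg fun _ _ => sq_nonneg _
    linarith [this]
  -- RHS tends to 0
  have hA : Filter.Tendsto (fun n => ∑ lam ∈ F, (v n lam)^2) Filter.atTop (nhds 0) := by
    have : Filter.Tendsto (fun n => ∑ lam ∈ F, (v n lam)^2) Filter.atTop
        (nhds (∑ lam ∈ F, (0:ℝ)^2)) :=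
      tendsto_finset_sum _ fun lam _ => (hpt lam).pow 2
    simpa using this
  have hB : Filter.Tendsto (fun n => C * ∑' lam, (d n lam)^2) Filter.atTop (nhds (C * 0)) :=
    hmain.const_mul C
  have hg : Filter.Tendsto
      (fun n => (∑ lam ∈ F, (v n lam)^2) + C * ∑' lam, (d n lam)^2)
      Filter.atTop (nhds 0) := by
    simpa using hA.add hB
  have hsq0 : Filter.Tendsto (fun n => ‖v n‖^2) Filter.atTop (nhds 0) :=
    squeeze_zero (fun n => sq_nonneg _) hbound hg
  have : Filter.Tendsto (fun n => Real.sqrt (‖v n‖^2)) Filter.atTop (nhds (Real.sqrt 0)) :=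
    hsq0.sqrt
  have heq : (fun n => ‖v n‖) = fun n => Real.sqrt (‖v n‖^2) := by
    funext n; rw [Real.sqrt_sq (norm_nonneg _)]
  rw [heq]
  simpa using this
end
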